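/- Let k, a be positive integers and n a natural number. Then (k+1)·|SP^U_n(k,a)| = |SP_n(k,a)| − δ_{a|n}; that is, the number of super (k,a)-paths of order n whose first non-horizontal step is an up step equals (|SP_n(k,a)| − δ_{a|n})/(k+1). -/

import Mathlib

/-- Steps for `(k,a)`-paths: up `U = (1,k)`, down `D = (1,-1)`, horizontal `H = (a,0)`. -/
inductive Step : Type
  | U : Step
  | D : Step
  | H : Step
  deriving DecidableEq

/-- The displacement of a single step. -/
def stepDisp (k a : ℕ) : Step → ℤ × ℤ
  | Step.U => (1, (k : ℤ))
  | Step.D => (1, -1)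
  | Step.H => ((a : ℤ), 0)

/-- The total displacement of a word of steps. -/
def pathDisp (k a : ℕ) (w : List Step) : ℤ × ℤ := (w.map (stepDisp k a)).sum

/-- A super `(k,a)`-path of order `n`: a step word with total displacement `(n,0)`. -/
def IsSuperPath (k a n : ℕ) (w : List Step) : Prop :=
  pathDisp k a w = ((n : ℤ), 0)

/-- The first letter different from `H` exists and is `U`. -/
def FirstNonHIsU (w : List Step) : Prop :=
  ∃ (l : ℕ) (r : List Step), w = List.replicate l Step.H ++ Step.U :: r

def FirstNonHIsD (w : List Step) : Prop :=
  ∃ (l : ℕ) (r : List Step), w = List.replicate l Step.H ++ Step.D :: r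


instance : Fintype Step where
  elems := {Step.U, Step.D, Step.H}
  complete := fun x => by cases x <;> simp

lemma split_exists {x : Step} : ∀ (r : List Step) (i : ℕ), i < r.count x →
    ∃ r1 r2, r = r1 ++ x :: r2 ∧ r1.count x = i := by
  intro r
  induction r with
  | nil => intro i h; simp at h
  | cons y t ih =>
    intro i h
    by_cases hy : y = x
    · subst hy
      cases i with
      | zero => exact ⟨[], t, by simp⟩
      | succ j =>
        rw [List.count_cons_self] at h
        obtain ⟨r1, r2, h1, h2⟩ := ih j (by omega)
        exact ⟨y :: r1, r2, by simp [h1], by simp [h2, List.count_cons]⟩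
    · rw [List.count_cons_of_ne hy] at h
      obtain ⟨r1, r2, h1, h2⟩ := ih i h
      refine ⟨y :: r1, r2, by simp [h1], ?_⟩
      rw [List.count_cons_of_ne hy, h2]

lemma split_unique {x : Step} : ∀ (r1 s1 r2 s2 : List Step),
    r1 ++ x :: r2 = s1 ++ x :: s2 → r1.count x = s1.count x → r1 = s1 ∧ r2 = s2 := by
  intro r1
  induction r1 with
  | nil =>
    intro s1 r2 s2 h hc
    cases s1 with
    | nil => simpa using h
    | cons y t =>
      simp only [List.nil_append, List.cons_append, List.cons.injEq] at h
      obtain ⟨rfl, h2⟩ := h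
      simp at hc
  | cons y t ih =>
    intro s1 r2 s2 h hc
    cases s1 with
    | nil =>
      simp only [List.cons_append, List.nil_append, List.cons.injEq] at h
      obtain ⟨rfl, h2⟩ := h
      simp at hc
    | cons z s =>
      simp only [List.cons_append, List.cons.injEq] at h
      obtain ⟨rfl, h2⟩ := h
      have hc2 : t.count x = s.count x := by
        by_cases hy : y = x <;> simp [List.count_cons, hy] at hc ⊢ <;> omega
      obtain ⟨hA, hB⟩ := ih s r2 s2 h2 hc2
      exact ⟨by rw [hA], hB⟩

lemma repl_eq {x y : Step} (hx : x ≠ Step.H) (hy : y ≠ Step.H) :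
    ∀ (l l' : ℕ) (r r' : List Step),
    List.replicate l Step.H ++ x :: r = List.replicate l' Step.H ++ y :: r' →
    l = l' ∧ x = y ∧ r = r' := by
  intro l
  induction l with
  | zero =>
    intro l' r r' h
    cases l' with
    | zero => simp at h; exact ⟨rfl, h.1, h.2⟩
    | succ m =>
      rw [List.replicate_succ] at h
      simp at h
      exact absurd h.1 hx
  | succ m ih =>
    intro l' r r' h
    cases l' with
    | zero =>
      rw [List.replicate_succ] at h
      simp at h
      exact absurd h.1.symm hy
    | succ m' =>
      rw [List.replicate_succ, List.replicate_succ] at h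
      simp only [List.cons_append, List.cons.injEq] at h
      obtain ⟨hl, hr, hrr⟩ := ih m' r r' h.2
      exact ⟨by omega, hr, hrr⟩

lemma length_eq_counts (w : List Step) :
    w.length = w.count Step.U + w.count Step.D + w.count Step.H := by
  induction w with
  | nil => simp
  | cons x t ih => cases x <;> simp [List.count_cons, ih] <;> omega

lemma pathDisp_eq (k a : ℕ) (w : List Step) :
    pathDisp k a w = (((w.count Step.U + w.count Step.D + a * w.count Step.H : ℕ) : ℤ),
      (k : ℤ) * w.count Step.U - w.count Step.D) := by
  induction w with
  | nil => simp [pathDisp]; rfl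
  | cons x t ih =>
    have : pathDisp k a (x :: t) = stepDisp k a x + pathDisp k a t := by
      simp [pathDisp]
    rw [this, ih]
    cases x <;> refine Prod.ext ?_ ?_ <;>
      simp [stepDisp, List.count_cons] <;> push_cast <;> ring

lemma isSuperPath_iff (k a n : ℕ) (w : List Step) :
    IsSuperPath k a n w ↔
      w.count Step.U + w.count Step.D + a * w.count Step.H = n ∧
      w.count Step.D = k * w.count Step.U := by
  rw [IsSuperPath, pathDisp_eq, Prod.ext_iff]
  simp only
  constructor
  · rintro ⟨h1, h2⟩
    have h1' : w.count Step.U + w.count Step.D + a * w.count Step.H = n := by exact_mod_cast h1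
    refine ⟨h1', ?_⟩
    have h2' : (k : ℤ) * w.count Step.U = w.count Step.D := by omega
    exact_mod_cast h2'.symm
  · rintro ⟨h1, h2⟩
    refine ⟨by exact_mod_cast congrArg (Nat.cast : ℕ → ℤ) h1, ?_⟩
    have : ((w.count Step.D : ℤ)) = (k : ℤ) * w.count Step.U := by exact_mod_cast congrArg (Nat.cast : ℕ → ℤ) h2
    omega

lemma tri (w : List Step) :
    w = List.replicate w.length Step.H ∨ FirstNonHIsU w ∨ FirstNonHIsD w := by
  induction w with
  | nil => simp
  | cons x t ih =>
    cases x with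
    | U => exact Or.inr (Or.inl ⟨0, t, by simp⟩)
    | D => exact Or.inr (Or.inr ⟨0, t, by simp⟩)
    | H =>
      rcases ih with h | ⟨l, r, h⟩ | ⟨l, r, h⟩
      · left; rw [List.length_cons, List.replicate_succ]; exact congrArg _ h
      · exact Or.inr (Or.inl ⟨l + 1, r, by rw [List.replicate_succ]; simp [h]⟩)
      · exact Or.inr (Or.inr ⟨l + 1, r, by rw [List.replicate_succ]; simp [h]⟩)

lemma ncard_prod {α β : Type*} (s : Set α) (t : Set β) :
    (s ×ˢ t).ncard = s.ncard * t.ncard := by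
  rw [← Nat.card_coe_set_eq, ← Nat.card_coe_set_eq, ← Nat.card_coe_set_eq,
    ← Nat.card_prod]
  exact Nat.card_congr (Equiv.Set.prod s t)

lemma ncard_Iio (m : ℕ) : (Set.Iio m).ncard = m := by
  rw [← Finset.coe_range, Set.ncard_coe_finset, Finset.card_range]



lemma countsU (l : ℕ) (r1 r2 : List Step) :
    (List.replicate l Step.H ++ Step.U :: (r1 ++ Step.D :: r2)).count Step.U
        = r1.count Step.U + r2.count Step.U + 1
    ∧ (List.replicate l Step.H ++ Step.U :: (r1 ++ Step.D :: r2)).count Step.D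
        = r1.count Step.D + r2.count Step.D + 1
    ∧ (List.replicate l Step.H ++ Step.U :: (r1 ++ Step.D :: r2)).count Step.H
        = l + (r1.count Step.H + r2.count Step.H) := by
  refine ⟨?_, ?_, ?_⟩ <;>
    simp [List.count_append, List.count_replicate, List.count_cons] <;> omega

lemma countsD (l : ℕ) (r1 r2 : List Step) :
    (List.replicate l Step.H ++ Step.D :: (r1 ++ Step.U :: r2)).count Step.U
        = r1.count Step.U + r2.count Step.U + 1
    ∧ (List.replicate l Step.H ++ Step.D :: (r1 ++ Step.U :: r2)).count Step.D
        = r1.count Step.D + r2.count Step.D + 1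
    ∧ (List.replicate l Step.H ++ Step.D :: (r1 ++ Step.U :: r2)).count Step.H
        = l + (r1.count Step.H + r2.count Step.H) := by
  refine ⟨?_, ?_, ?_⟩ <;>
    simp [List.count_append, List.count_replicate, List.count_cons] <;> omega

lemma countsRU (l : ℕ) (r : List Step) :
    (List.replicate l Step.H ++ Step.U :: r).count Step.U = r.count Step.U + 1
    ∧ (List.replicate l Step.H ++ Step.U :: r).count Step.D = r.count Step.D
    ∧ (List.replicate l Step.H ++ Step.U :: r).count Step.H = l + r.count Step.H := by
  refine ⟨?_, ?_, ?_⟩ <;>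
    simp [List.count_append, List.count_replicate, List.count_cons] <;> omega

lemma countsRD (l : ℕ) (r : List Step) :
    (List.replicate l Step.H ++ Step.D :: r).count Step.U = r.count Step.U
    ∧ (List.replicate l Step.H ++ Step.D :: r).count Step.D = r.count Step.D + 1
    ∧ (List.replicate l Step.H ++ Step.D :: r).count Step.H = l + r.count Step.H := by
  refine ⟨?_, ?_, ?_⟩ <;>
    simp [List.count_append, List.count_replicate, List.count_cons] <;> omega

lemma countsMidD (r1 r2 : List Step) :
    (r1 ++ Step.D :: r2).count Step.U = r1.count Step.U + r2.count Step.U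
    ∧ (r1 ++ Step.D :: r2).count Step.D = r1.count Step.D + r2.count Step.D + 1
    ∧ (r1 ++ Step.D :: r2).count Step.H = r1.count Step.H + r2.count Step.H := by
  refine ⟨?_, ?_, ?_⟩ <;>
    simp [List.count_append, List.count_cons] <;> omega

lemma countsMidU (r1 r2 : List Step) :
    (r1 ++ Step.U :: r2).count Step.U = r1.count Step.U + r2.count Step.U + 1
    ∧ (r1 ++ Step.U :: r2).count Step.D = r1.count Step.D + r2.count Step.D
    ∧ (r1 ++ Step.U :: r2).count Step.H = r1.count Step.H + r2.count Step.H := by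
  refine ⟨?_, ?_, ?_⟩ <;>
    simp [List.count_append, List.count_cons] <;> omega

def fU (t : ℕ × List Step × List Step) : List Step × ℕ :=
  (List.replicate t.1 Step.H ++ Step.U :: (t.2.1 ++ Step.D :: t.2.2), t.2.1.count Step.D)

def fD (t : ℕ × List Step × List Step) : List Step × ℕ :=
  (List.replicate t.1 Step.H ++ Step.D :: (t.2.1 ++ Step.U :: t.2.2), t.2.1.count Step.U)

lemma fU_mk (l : ℕ) (r1 r2 : List Step) :
    fU (l, r1, r2) = (List.replicate l Step.H ++ Step.U :: (r1 ++ Step.D :: r2),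
      r1.count Step.D) := rfl

lemma fD_mk (l : ℕ) (r1 r2 : List Step) :
    fD (l, r1, r2) = (List.replicate l Step.H ++ Step.D :: (r1 ++ Step.U :: r2),
      r1.count Step.U) := rfl

lemma core (k a n u : ℕ) :
    {w | IsSuperPath k a n w ∧ FirstNonHIsD w ∧ w.count Step.U = u}.ncard * u =
    {w | IsSuperPath k a n w ∧ FirstNonHIsU w ∧ w.count Step.U = u}.ncard * (k * u) := by
  classical
  set SU := {w | IsSuperPath k a n w ∧ FirstNonHIsU w ∧ w.count Step.U = u} with hSU
  set SD := {w | IsSuperPath k a n w ∧ FirstNonHIsD w ∧ w.count Step.U = u} with hSD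
  set A : Set (ℕ × List Step × List Step) := {t |
    (t.2.1.count Step.U + t.2.2.count Step.U + 1)
      + (t.2.1.count Step.D + t.2.2.count Step.D + 1)
      + a * (t.1 + (t.2.1.count Step.H + t.2.2.count Step.H)) = n
    ∧ t.2.1.count Step.D + t.2.2.count Step.D + 1 = k * u
    ∧ t.2.1.count Step.U + t.2.2.count Step.U + 1 = u} with hA
  have keyU : A.ncard = SU.ncard * (k * u) := by
    have hinj : Set.InjOn fU A := by
      rintro ⟨l, r1, r2⟩ _ ⟨l', r1', r2'⟩ _ heq
      rw [fU_mk, fU_mk, Prod.ext_iff] at heq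
      obtain ⟨h1, h2⟩ := heq
      simp only at h1 h2
      obtain ⟨rfl, -, h3⟩ := repl_eq (by simp) (by simp) _ _ _ _ h1
      obtain ⟨rfl, rfl⟩ := split_unique _ _ _ _ h3 h2
      rfl
    have himg : fU '' A = SU ×ˢ Set.Iio (k * u) := by
      ext p
      constructor
      · rintro ⟨⟨l, r1, r2⟩, ht, heq⟩
        obtain ⟨e1, e2, e3⟩ := ht
        simp only at e1 e2 e3
        subst heq
        rw [fU_mk]
        obtain ⟨c1, c2, c3⟩ := countsU l r1 r2
        refine ⟨⟨?_, ⟨l, _, rfl⟩, ?_⟩, ?_⟩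
        · rw [isSuperPath_iff, c1, c2, c3]
          refine ⟨e1, ?_⟩
          rw [e3]; exact e2
        · show (List.replicate l Step.H ++ Step.U :: (r1 ++ Step.D :: r2)).count Step.U = u
          rw [c1]; exact e3
        · show r1.count Step.D ∈ Set.Iio (k * u)
          simp only [Set.mem_Iio]
          omega
      · obtain ⟨w, i⟩ := p
        rintro ⟨⟨hsp, ⟨l, r, rfl⟩, hcu⟩, hi⟩
        simp only [Set.mem_Iio] at hi
        rw [isSuperPath_iff] at hsp
        obtain ⟨h1, h2⟩ := hsp
        obtain ⟨c1, c2, c3⟩ := countsRU l r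
        rw [c1, c2, c3] at h1
        rw [c1, c2] at h2
        rw [c1] at hcu
        rw [hcu] at h2
        obtain ⟨r1, r2, rfl, hr1⟩ := split_exists (x := Step.D) r i (by omega)
        obtain ⟨m1, m2, m3⟩ := countsMidD r1 r2
        rw [m1] at hcu
        rw [m1, m2, m3] at h1
        rw [m2] at h2
        refine ⟨⟨l, r1, r2⟩, ⟨?_, ?_, ?_⟩, ?_⟩
        · show (r1.count Step.U + r2.count Step.U + 1)
            + (r1.count Step.D + r2.count Step.D + 1)
            + a * (l + (r1.count Step.H + r2.count Step.H)) = n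
          omega
        · show r1.count Step.D + r2.count Step.D + 1 = k * u
          exact h2
        · show r1.count Step.U + r2.count Step.U + 1 = u
          omega
        · rw [fU_mk, hr1]
    calc A.ncard = (fU '' A).ncard := (Set.ncard_image_of_injOn hinj).symm
    _ = SU.ncard * (k * u) := by rw [himg, ncard_prod, ncard_Iio]
  have keyD : A.ncard = SD.ncard * u := by
    have hinj : Set.InjOn fD A := by
      rintro ⟨l, r1, r2⟩ _ ⟨l', r1', r2'⟩ _ heq
      rw [fD_mk, fD_mk, Prod.ext_iff] at heq
      obtain ⟨h1, h2⟩ := heq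
      simp only at h1 h2
      obtain ⟨rfl, -, h3⟩ := repl_eq (by simp) (by simp) _ _ _ _ h1
      obtain ⟨rfl, rfl⟩ := split_unique _ _ _ _ h3 h2
      rfl
    have himg : fD '' A = SD ×ˢ Set.Iio u := by
      ext p
      constructor
      · rintro ⟨⟨l, r1, r2⟩, ht, heq⟩
        obtain ⟨e1, e2, e3⟩ := ht
        simp only at e1 e2 e3
        subst heq
        rw [fD_mk]
        obtain ⟨c1, c2, c3⟩ := countsD l r1 r2
        refine ⟨⟨?_, ⟨l, _, rfl⟩, ?_⟩, ?_⟩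
        · rw [isSuperPath_iff, c1, c2, c3]
          refine ⟨e1, ?_⟩
          rw [e3]; exact e2
        · show (List.replicate l Step.H ++ Step.D :: (r1 ++ Step.U :: r2)).count Step.U = u
          rw [c1]; exact e3
        · show r1.count Step.U ∈ Set.Iio u
          simp only [Set.mem_Iio]
          omega
      · obtain ⟨w, i⟩ := p
        rintro ⟨⟨hsp, ⟨l, r, rfl⟩, hcu⟩, hi⟩
        simp only [Set.mem_Iio] at hi
        rw [isSuperPath_iff] at hsp
        obtain ⟨h1, h2⟩ := hsp
        obtain ⟨c1, c2, c3⟩ := countsRD l r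
        rw [c1, c2, c3] at h1
        rw [c1, c2] at h2
        rw [c1] at hcu
        rw [hcu] at h2
        obtain ⟨r1, r2, rfl, hr1⟩ := split_exists (x := Step.U) r i (by omega)
        obtain ⟨m1, m2, m3⟩ := countsMidU r1 r2
        rw [m1] at hcu
        rw [m1, m2, m3] at h1
        rw [m2] at h2
        refine ⟨⟨l, r1, r2⟩, ⟨?_, ?_, ?_⟩, ?_⟩
        · show (r1.count Step.U + r2.count Step.U + 1)
            + (r1.count Step.D + r2.count Step.D + 1)
            + a * (l + (r1.count Step.H + r2.count Step.H)) = n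
          omega
        · show r1.count Step.D + r2.count Step.D + 1 = k * u
          omega
        · show r1.count Step.U + r2.count Step.U + 1 = u
          exact hcu
        · rw [fD_mk, hr1]
    calc A.ncard = (fD '' A).ncard := (Set.ncard_image_of_injOn hinj).symm
    _ = SD.ncard * u := by rw [himg, ncard_prod, ncard_Iio]
  rw [← keyD, ← keyU]

lemma firstU_count (w : List Step) (h : FirstNonHIsU w) : 0 < w.count Step.U := by
  obtain ⟨l, r, rfl⟩ := h
  obtain ⟨c1, -, -⟩ := countsRU l r
  omega

lemma not_UD (w : List Step) (hU : FirstNonHIsU w) (hD : FirstNonHIsD w) : False := by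
  obtain ⟨l, r, rfl⟩ := hU
  obtain ⟨l', r', h⟩ := hD
  obtain ⟨-, h2, -⟩ := repl_eq (by simp) (by simp) _ _ _ _ h
  exact Step.noConfusion h2

lemma sp_length_le (k a n : ℕ) (ha : 0 < a) (w : List Step) (h : IsSuperPath k a n w) :
    w.length ≤ n := by
  rw [isSuperPath_iff] at h
  have h2 := length_eq_counts w
  have h3 : w.count Step.H ≤ a * w.count Step.H := Nat.le_mul_of_pos_left _ ha
  omega

lemma peru (k a n u : ℕ) (ha : 0 < a) (hu : 0 < u) :
    {w | IsSuperPath k a n w ∧ w.count Step.U = u}.ncard =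
      (k + 1) * {w | IsSuperPath k a n w ∧ FirstNonHIsU w ∧ w.count Step.U = u}.ncard := by
  classical
  set SU := {w | IsSuperPath k a n w ∧ FirstNonHIsU w ∧ w.count Step.U = u} with hSU
  set SD := {w | IsSuperPath k a n w ∧ FirstNonHIsD w ∧ w.count Step.U = u} with hSD
  have hfinU : SU.Finite := by
    apply (List.finite_length_le Step n).subset
    rintro w ⟨hsp, -, -⟩
    exact sp_length_le k a n ha w hsp
  have hfinD : SD.Finite := by
    apply (List.finite_length_le Step n).subset
    rintro w ⟨hsp, -, -⟩
    exact sp_length_le k a n ha w hsp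
  have hdisj : Disjoint SU SD := by
    rw [Set.disjoint_left]
    rintro w ⟨-, hU, -⟩ ⟨-, hD, -⟩
    exact not_UD w hU hD
  have hunion : {w | IsSuperPath k a n w ∧ w.count Step.U = u} = SU ∪ SD := by
    ext w
    constructor
    · rintro ⟨hsp, hc⟩
      rcases tri w with h | h | h
      · exfalso
        have : w.count Step.U = 0 := by
          rw [h]
          simp [List.count_replicate]
        omega
      · exact Or.inl ⟨hsp, h, hc⟩
      · exact Or.inr ⟨hsp, h, hc⟩
    · rintro (⟨hsp, -, hc⟩ | ⟨hsp, -, hc⟩) <;> exact ⟨hsp, hc⟩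
  have hcore := core k a n u
  have hSDcard : SD.ncard = k * SU.ncard := by
    have : SD.ncard * u = (k * SU.ncard) * u := by
      rw [hcore]; ring
    exact Nat.eq_of_mul_eq_mul_right hu this
  rw [hunion, Set.ncard_union_eq hdisj hfinU hfinD, hSDcard]
  ring

lemma zeroU (k a n : ℕ) (ha : 0 < a) :
    {w | IsSuperPath k a n w ∧ w.count Step.U = 0}.ncard = if a ∣ n then 1 else 0 := by
  split_ifs with hd
  · obtain ⟨m, rfl⟩ := hd
    have : {w | IsSuperPath (k := k) (a := a) (n := a * m) w ∧ w.count Step.U = 0}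
        = {List.replicate m Step.H} := by
      ext w
      constructor
      · rintro ⟨hsp, hc⟩
        rw [isSuperPath_iff] at hsp
        obtain ⟨h1, h2⟩ := hsp
        rw [hc] at h1 h2
        have hd0 : w.count Step.D = 0 := by omega
        have hhm : w.count Step.H = m := by
          have : a * w.count Step.H = a * m := by omega
          exact Nat.eq_of_mul_eq_mul_left ha this
        have hall : ∀ b ∈ w, b = Step.H := by
          intro b hb
          cases b
          · exact absurd (List.count_pos_iff.mpr hb) (by omega)
          · exact absurd (List.count_pos_iff.mpr hb) (by omega)
          · rfl
        have hlen : w.length = m := by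
          have := length_eq_counts w
          omega
        rw [Set.mem_singleton_iff, List.eq_replicate_iff]
        exact ⟨hlen, hall⟩
      · rintro rfl
        constructor
        · rw [isSuperPath_iff]
          simp [List.count_replicate]
        · simp [List.count_replicate]
    rw [this, Set.ncard_singleton]
  · have hempty : {w | IsSuperPath k a n w ∧ w.count Step.U = 0} = ∅ := by
      ext w
      simp only [Set.mem_setOf_eq, Set.mem_empty_iff_false, iff_false, not_and]
      intro hsp hc
      rw [isSuperPath_iff] at hsp
      obtain ⟨h1, h2⟩ := hsp
      rw [hc] at h1 h2
      exact hd ⟨w.count Step.H, by omega⟩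
    rw [hempty]
    exact Set.ncard_empty _

/-- `(k+1)·|SP^U_n(k,a)| = |SP_n(k,a)| − δ_{a∣n}`. -/
theorem stmt0 (k a n : ℕ) (hk : 0 < k) (ha : 0 < a) :
    (k + 1) * {w : List Step | IsSuperPath k a n w ∧ FirstNonHIsU w}.ncard =
      {w : List Step | IsSuperPath k a n w}.ncard - (if a ∣ n then 1 else 0) := by
  classical
  have hfin : {w : List Step | IsSuperPath k a n w}.Finite := by
    apply (List.finite_length_le Step n).subset
    intro w hw
    exact sp_length_le k a n ha w hw
  have hfinU : {w : List Step | IsSuperPath k a n w ∧ FirstNonHIsU w}.Finite := by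
    apply (List.finite_length_le Step n).subset
    rintro w ⟨hw, -⟩
    exact sp_length_le k a n ha w hw
  set F := hfin.toFinset with hF
  set FU := hfinU.toFinset with hFU
  have hmemF : ∀ w ∈ F, w.count Step.U ∈ Finset.range (n + 1) := by
    intro w hw
    rw [hF, Set.Finite.mem_toFinset] at hw
    rw [Finset.mem_range, Nat.lt_succ_iff]
    exact le_trans (List.count_le_length) (sp_length_le k a n ha w hw)
  have hmemFU : ∀ w ∈ FU, w.count Step.U ∈ Finset.range (n + 1) := by
    intro w hw
    rw [hFU, Set.Finite.mem_toFinset] at hw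
    rw [Finset.mem_range, Nat.lt_succ_iff]
    exact le_trans (List.count_le_length) (sp_length_le k a n ha w hw.1)
  have hsum := Finset.card_eq_sum_card_fiberwise hmemF
  have hsumU := Finset.card_eq_sum_card_fiberwise hmemFU
  have hFu : ∀ u, (F.filter (fun w => w.count Step.U = u)).card =
      {w | IsSuperPath k a n w ∧ w.count Step.U = u}.ncard := by
    intro u
    rw [← Set.ncard_coe_finset]
    congr 1
    ext w
    simp [hF, Set.Finite.mem_toFinset]
  have hFUu : ∀ u, (FU.filter (fun w => w.count Step.U = u)).card =
      {w | IsSuperPath k a n w ∧ FirstNonHIsU w ∧ w.count Step.U = u}.ncard := by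
    intro u
    rw [← Set.ncard_coe_finset]
    congr 1
    ext w
    simp [hFU, Set.Finite.mem_toFinset, and_assoc]
  have hcardF : {w : List Step | IsSuperPath k a n w}.ncard = F.card :=
    Set.ncard_eq_toFinset_card _ hfin
  have hcardFU : {w : List Step | IsSuperPath k a n w ∧ FirstNonHIsU w}.ncard = FU.card :=
    Set.ncard_eq_toFinset_card _ hfinU
  rw [hcardF, hcardFU, hsum, hsumU, Finset.mul_sum]
  rw [Finset.sum_range_succ', Finset.sum_range_succ']
  have h0U : (k + 1) * (FU.filter (fun w => w.count Step.U = 0)).card = 0 := by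
    rw [hFUu]
    have : {w | IsSuperPath k a n w ∧ FirstNonHIsU w ∧ w.count Step.U = 0} = ∅ := by
      ext w
      simp only [Set.mem_setOf_eq, Set.mem_empty_iff_false, iff_false, not_and]
      intro _ hU hc
      exact absurd hc (by have := firstU_count w hU; omega)
    rw [this, Set.ncard_empty, Nat.mul_zero]
  have h0F : (F.filter (fun w => w.count Step.U = 0)).card = if a ∣ n then 1 else 0 := by
    rw [hFu]
    exact zeroU k a n ha
  have hterm : ∀ i, (k + 1) * (FU.filter (fun w => w.count Step.U = i + 1)).card =
      (F.filter (fun w => w.count Step.U = i + 1)).card := by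
    intro i
    rw [hFu, hFUu, peru k a n (i + 1) ha (Nat.succ_pos i)]
  have hsums : ∑ i ∈ Finset.range n, (k + 1) * (FU.filter (fun w => w.count Step.U = i + 1)).card
      = ∑ i ∈ Finset.range n, (F.filter (fun w => w.count Step.U = i + 1)).card :=
    Finset.sum_congr rfl (fun i _ => hterm i)
  set d := if a ∣ n then 1 else 0 with hd
  omega
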